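/- Progressive iteration restricts to H₊: if f : X → H₀M (Y ⊕ X) takes all its values in H₊ (Y ⊕ X) and is progressive in X, then for every x ∈ X the iteration f^‡ x = ⊔ₙ f⁽ⁿ⁾ x lies in H₊ Y. -/

import Mathlib

open scoped ENNReal NNReal
open Classical

universe u v w

/-- Raw trajectories: a duration in `ℝ≥0∞` and a partial evolution `ℝ≥0 → Option X`. -/
abbrev Traj (X : Type u) := ℝ≥0∞ × (ℝ≥0 → Option X)

/-- The flattening condition: if the duration is finite, the evolution is constant
from the duration onwards.  Membership in `H₀M X` means exactly `Flat`. -/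
def Flat {X : Type u} (p : Traj X) : Prop :=
  ∀ t : ℝ≥0, p.1 ≤ (t : ℝ≥0∞) → p.2 t = p.2 p.1.toNNReal

/-- The unit of `H₀M`. -/
def eta {X : Type u} (x : X) : Traj X := (0, fun _ => some x)

/-- The Kleisli lifting `f^†` of the monad `H₀M`. -/
noncomputable def kl {X : Type u} {Y : Type v} (f : X → Traj Y) (p : Traj X) : Traj Y :=
  if p.1 = ⊤ then (p.1, fun t => (p.2 t).bind fun x' => (f x').2 0)
  else
    match p.2 p.1.toNNReal with
    | none => (p.1, fun t => (p.2 t).bind fun x' => (f x').2 0)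
    | some x =>
        (p.1 + (f x).1,
          fun t =>
            if (t : ℝ≥0∞) < p.1 then (p.2 t).bind fun x' => (f x').2 0
            else (f x).2 (t - p.1.toNNReal))

/-- Membership in `H₊ X ⊆ H₀M X`: the evolution is not everywhere `none`, and it is
defined at every time instant strictly below the duration. -/
def memHp {X : Type u} (p : Traj X) : Prop :=
  p.2 ≠ (fun _ => none) ∧ ∀ t : ℝ≥0, (t : ℝ≥0∞) < p.1 → p.2 t ≠ none

/-- Membership in `H X ⊆ H₀M X`: either the evolution is total, or the duration is `∞`
and the domain of the evolution is downward closed. -/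
def memH {X : Type u} (p : Traj X) : Prop :=
  (∀ t, p.2 t ≠ none) ∨
    (p.1 = ⊤ ∧ ∀ s t : ℝ≥0, s ≤ t → p.2 t ≠ none → p.2 s ≠ none)

/-- The approximation order `⊑` on `H₀M X`. -/
def TrajLE {X : Type u} (p q : Traj X) : Prop :=
  p.1 ≤ q.1 ∧ (∀ t, p.2 t ≠ none → q.2 t = p.2 t) ∧
    (p.1 ≠ ⊤ → p.2 p.1.toNNReal ≠ none → p.1 = q.1)

/-- Join of an ω-chain in `H₀M X`: the duration is the supremum of the durations, and
the evolution at `t` is the common value `(c i).2 t` whenever it is `≠ none` for some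
`i`, and `none` otherwise. -/
noncomputable def chainJoin {X : Type u} (c : ℕ → Traj X) : Traj X :=
  (⨆ i, (c i).1,
    fun t => if h : ∃ i, (c i).2 t ≠ none then (c h.choose).2 t else none)

/-- `d⋆ = sup { s < d ∣ e is defined on [0, s) }`. -/
noncomputable def dstar {X : Type u} (p : Traj X) : ℝ≥0∞ :=
  sSup {s : ℝ≥0∞ | s < p.1 ∧ ∀ t : ℝ≥0, (t : ℝ≥0∞) < s → p.2 t ≠ none}

/-- The retraction `ρ : H₀M X → H₀M X` onto `H X`. -/
noncomputable def rho {X : Type u} (p : Traj X) : Traj X :=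
  ((if ∀ t, p.2 t ≠ none then p.1 else ⊤),
    fun t =>
      if (t : ℝ≥0∞) ≤ dstar p then p.2 t
      else if ∀ t', p.2 t' ≠ none then p.2 (dstar p).toNNReal else none)

/-- The iterates `f⁽ⁿ⁾` of `f : X → H₀M (Y ⊕ X)`. -/
noncomputable def iter {X Y : Type u} (f : X → Traj (Y ⊕ X)) : ℕ → X → Traj Y
  | 0, _ => (0, fun _ => none)
  | n + 1, x => kl (Sum.elim eta (iter f n)) (f x)

/-- The least-fixpoint iteration `f^‡ x = ⊔ₙ f⁽ⁿ⁾ x`. -/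
noncomputable def iterStar {X Y : Type u} (f : X → Traj (Y ⊕ X)) (x : X) : Traj Y :=
  chainJoin fun n => iter f n x

/-- `f : X → H₊ (A ⊕ B)` is progressive in `B` (guarded in the second summand). -/
def Prog {X : Type u} {A B : Type v} (f : X → Traj (A ⊕ B)) : Prop :=
  ∀ x, ∃ a : A, (f x).2 0 = some (Sum.inl a)

/-- `kl` preserves flatness. -/
lemma kl_flat {X : Type u} {Y : Type v} {g : X → Traj Y} (hg : ∀ z, Flat (g z))
    {p : Traj X} (hp : Flat p) : Flat (kl g p) := by
  intro t ht
  by_cases hd : p.1 = ⊤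
  · rw [kl, if_pos hd] at ht ⊢
    simp [hd] at ht
  obtain ⟨a, ha⟩ : ∃ a : ℝ≥0, p.1 = a := ⟨p.1.toNNReal, (ENNReal.coe_toNNReal hd).symm⟩
  rcases hx : p.2 p.1.toNNReal with _ | x₀
  · rw [kl, if_neg hd, hx] at ht ⊢
    simp only at ht ⊢
    rw [hp t ht]
  · rw [kl, if_neg hd, hx] at ht ⊢
    simp only at ht ⊢
    have hgd : (g x₀).1 ≠ ⊤ := by
      intro h; rw [h] at ht; simp [ENNReal.add_eq_top] at ht
    obtain ⟨b, hb⟩ : ∃ b : ℝ≥0, (g x₀).1 = b := ⟨(g x₀).1.toNNReal, (ENNReal.coe_toNNReal hgd).symm⟩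
    rw [ha, hb] at ht
    rw [← ENNReal.coe_add, ENNReal.coe_le_coe] at ht
    have hab : (p.1 + (g x₀).1).toNNReal = a + b := by
      rw [ha, hb, ← ENNReal.coe_add, ENNReal.toNNReal_coe]
    rw [hab]
    have hta : ¬ ((t : ℝ≥0∞) < p.1) := by
      rw [ha, ENNReal.coe_lt_coe]; exact not_lt.2 (le_trans (le_add_right le_rfl) ht)
    have hsa : ¬ (((a + b : ℝ≥0) : ℝ≥0∞) < p.1) := by
      rw [ha, ENNReal.coe_lt_coe]; exact not_lt.2 (le_add_right le_rfl)
    rw [if_neg hta, if_neg hsa]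
    have h1 : p.1.toNNReal = a := by rw [ha, ENNReal.toNNReal_coe]
    rw [h1, add_tsub_cancel_left]
    have : b ≤ t - a := le_tsub_of_add_le_left ht
    rw [hg x₀ (t - a) (by rw [hb]; exact_mod_cast this), hb, ENNReal.toNNReal_coe]

/-- `kl` is monotone in the lifted map, on the evolution components. -/
lemma kl_ev_mono {X : Type u} {Y : Type v} {g g' : X → Traj Y}
    (hev : ∀ z t, (g z).2 t ≠ none → (g' z).2 t = (g z).2 t)
    (p : Traj X) (t : ℝ≥0) (h : (kl g p).2 t ≠ none) :
    (kl g' p).2 t = (kl g p).2 t := by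
  have hbind : ∀ s : ℝ≥0, ((p.2 s).bind fun x' => (g x').2 0) ≠ none →
      ((p.2 s).bind fun x' => (g' x').2 0) = (p.2 s).bind fun x' => (g x').2 0 := by
    intro s hs
    rcases hps : p.2 s with _ | x'
    · rw [hps] at hs; simp at hs
    · rw [hps] at hs
      exact hev x' 0 hs
  by_cases hd : p.1 = ⊤
  · simp only [kl, if_pos hd] at h ⊢
    exact hbind t h
  rcases hx : p.2 p.1.toNNReal with _ | x₀
  · simp only [kl, if_neg hd, hx] at h ⊢
    exact hbind t h
  · simp only [kl, if_neg hd, hx] at h ⊢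
    by_cases hlt : (t : ℝ≥0∞) < p.1
    · simp only [if_pos hlt] at h ⊢
      exact hbind t h
    · simp only [if_neg hlt] at h ⊢
      exact hev x₀ _ h

section IterLemmas

variable {X Y : Type u} (f : X → Traj (Y ⊕ X))

lemma elim_flat (n : ℕ)
    (ih : ∀ x, Flat (iter f n x)) (z : Y ⊕ X) : Flat (Sum.elim eta (iter f n) z) := by
  cases z with
  | inl y => intro t _; rfl
  | inr x => exact ih x

lemma iter_flat (hf : ∀ x, Flat (f x) ∧ memHp (f x)) :
    ∀ n x, Flat (iter f n x) := by
  intro n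
  induction n with
  | zero => intro x t _; rfl
  | succ n ih =>
    intro x
    show Flat (kl (Sum.elim eta (iter f n)) (f x))
    exact kl_flat (elim_flat f n ih) (hf x).1

lemma iter_ev_mono :
    ∀ n x t, (iter f n x).2 t ≠ none → (iter f (n + 1) x).2 t = (iter f n x).2 t := by
  intro n
  induction n with
  | zero => intro x t h; exact absurd rfl h
  | succ n ih =>
    intro x t h
    show (kl (Sum.elim eta (iter f (n + 1))) (f x)).2 t
        = (kl (Sum.elim eta (iter f n)) (f x)).2 t
    refine kl_ev_mono (fun z s hz => ?_) (f x) t h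
    cases z with
    | inl y => rfl
    | inr x' => exact ih x' s hz

lemma iter_ev_mono' :
    ∀ n m, n ≤ m → ∀ x t, (iter f n x).2 t ≠ none → (iter f m x).2 t = (iter f n x).2 t := by
  intro n m hnm
  induction hnm with
  | refl => intro x t _; rfl
  | @step m hm ih =>
    intro x t h
    rw [iter_ev_mono f m x t (by rw [ih x t h]; exact h), ih x t h]

lemma iter_ev_zero (hprog : Prog f) :
    ∀ n x, ∃ y : Y, (iter f (n + 1) x).2 0 = some y := by
  intro n x
  obtain ⟨y, hy⟩ := hprog x
  refine ⟨y, ?_⟩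
  show (kl (Sum.elim eta (iter f n)) (f x)).2 0 = some y
  by_cases hd : (f x).1 = ⊤
  · simp only [kl, if_pos hd]
    rw [hy]; rfl
  rcases hx : (f x).2 (f x).1.toNNReal with _ | x₀
  · simp only [kl, if_neg hd, hx]
    rw [hy]; rfl
  · simp only [kl, if_neg hd, hx]
    by_cases h0 : ((0 : ℝ≥0) : ℝ≥0∞) < (f x).1
    · simp only [if_pos h0]
      rw [hy]; rfl
    · simp only [if_neg h0]
      have hz : (f x).1 = 0 := by
        simpa using (not_lt.1 h0)
      rw [hz] at hx
      simp only [ENNReal.toNNReal_zero] at hx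
      rw [hy] at hx
      cases hx
      rfl

end IterLemmas

section IterDefined

variable {X Y : Type u} (f : X → Traj (Y ⊕ X))

lemma bind_elim_ne_none (hprog : Prog f) (n : ℕ) {x' : Y ⊕ X} :
    ((some x').bind fun z => (Sum.elim eta (iter f (n + 1)) z).2 0) ≠ none := by
  cases x' with
  | inl y => simp [eta]
  | inr x'' =>
    obtain ⟨y, hy⟩ := iter_ev_zero f hprog n x''
    simp [hy]

lemma iter_defined (hf : ∀ x, Flat (f x) ∧ memHp (f x)) (hprog : Prog f) :
    ∀ n x (t : ℝ≥0), (t : ℝ≥0∞) < (iter f n x).1 → (iter f (n + 1) x).2 t ≠ none := by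
  intro n
  induction n with
  | zero =>
    intro x t ht
    exact absurd ht (by simp [iter])
  | succ n ih =>
    intro x t ht
    replace ht : (t : ℝ≥0∞) < (kl (Sum.elim eta (iter f n)) (f x)).1 := ht
    show (kl (Sum.elim eta (iter f (n + 1))) (f x)).2 t ≠ none
    have hmem := (hf x).2.2
    by_cases hd : (f x).1 = ⊤
    · simp only [kl, if_pos hd]
      rcases hpt : (f x).2 t with _ | x'
      · exact absurd (hpt) (hmem t (by rw [hd]; exact ENNReal.coe_lt_top))
      · exact bind_elim_ne_none f hprog n
    rcases hx : (f x).2 (f x).1.toNNReal with _ | x₀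
    · simp only [kl, if_neg hd, hx] at ht ⊢
      rcases hpt : (f x).2 t with _ | x'
      · exact absurd hpt (hmem t ht)
      · exact bind_elim_ne_none f hprog n
    · simp only [kl, if_neg hd, hx] at ht ⊢
      by_cases hlt : (t : ℝ≥0∞) < (f x).1
      · simp only [if_pos hlt]
        rcases hpt : (f x).2 t with _ | x'
        · exact absurd hpt (hmem t hlt)
        · exact bind_elim_ne_none f hprog n
      · simp only [if_neg hlt]
        cases x₀ with
        | inl y => simp [eta]
        | inr x'' =>
          refine ih x'' (t - (f x).1.toNNReal) ?_
          obtain ⟨a, ha⟩ : ∃ a : ℝ≥0, (f x).1 = a :=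
            ⟨(f x).1.toNNReal, (ENNReal.coe_toNNReal hd).symm⟩
          have hat : a ≤ t := by
            rw [ha, ENNReal.coe_lt_coe] at hlt; exact not_lt.1 hlt
          have h1 : (f x).1.toNNReal = a := by rw [ha, ENNReal.toNNReal_coe]
          rw [h1]
          set B := (Sum.elim eta (iter f n) (Sum.inr x'')).1 with hB
          show ((t - a : ℝ≥0) : ℝ≥0∞) < B
          rcases eq_or_ne B ⊤ with hBt | hBt
          · rw [hBt]; exact ENNReal.coe_lt_top
          · obtain ⟨b, hb⟩ : ∃ b : ℝ≥0, B = b := ⟨B.toNNReal, (ENNReal.coe_toNNReal hBt).symm⟩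
            rw [hb, ENNReal.coe_lt_coe]
            rw [hb, ha, ← ENNReal.coe_add, ENNReal.coe_lt_coe] at ht
            exact tsub_lt_iff_left hat |>.2 ht

end IterDefined
/-- Progressive iteration restricts to `H₊`: if `f` takes values in `H₊ (Y ⊕ X)` and
is progressive in `X`, then `f^‡ x` lies in `H₊ Y` for every `x`. -/
theorem iterStar_mem_Hplus {X Y : Type u} (f : X → Traj (Y ⊕ X))
    (hf : ∀ x, Flat (f x) ∧ memHp (f x)) (hprog : Prog f) (x : X) :
    Flat (iterStar f x) ∧ memHp (iterStar f x) := by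
  set c : ℕ → Traj Y := fun n => iter f n x with hc
  have hflat : ∀ n, Flat (c n) := fun n => iter_flat f hf n x
  have hcons : ∀ i j s, (c i).2 s ≠ none → (c j).2 s ≠ none → (c j).2 s = (c i).2 s := by
    intro i j s hi hj
    rcases le_total i j with h | h
    · exact iter_ev_mono' f i j h x s hi
    · exact (iter_ev_mono' f j i h x s hj).symm
  refine ⟨?_, ?_, ?_⟩
  · -- Flat
    intro t ht
    replace ht : (⨆ i, (c i).1) ≤ (t : ℝ≥0∞) := ht
    have hD : (⨆ i, (c i).1) ≠ ⊤ := (lt_of_le_of_lt ht ENNReal.coe_lt_top).ne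
    set s : ℝ≥0 := (⨆ i, (c i).1).toNNReal with hsdef
    have hs : (s : ℝ≥0∞) = ⨆ i, (c i).1 := ENNReal.coe_toNNReal hD
    have hdt : ∀ i, (c i).1 ≤ (t : ℝ≥0∞) := fun i => le_trans (le_iSup (fun i => (c i).1) i) ht
    have hds : ∀ i, (c i).1 ≤ (s : ℝ≥0∞) := fun i => by
      rw [hs]; exact le_iSup (fun i => (c i).1) i
    have key : ∀ i, (c i).2 t = (c i).2 s := fun i => by
      rw [hflat i t (hdt i), hflat i s (hds i)]
    show (if h : ∃ i, (c i).2 t ≠ none then (c h.choose).2 t else none)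
        = (if h : ∃ i, (c i).2 s ≠ none then (c h.choose).2 s else none)
    by_cases h : ∃ i, (c i).2 t ≠ none
    · have hch : (c h.choose).2 s ≠ none := by rw [← key h.choose]; exact h.choose_spec
      have h' : ∃ i, (c i).2 s ≠ none := ⟨h.choose, hch⟩
      rw [dif_pos h, dif_pos h', key h.choose]
      exact hcons h'.choose h.choose s h'.choose_spec hch
    · have h' : ¬ ∃ i, (c i).2 s ≠ none := by
        push_neg at h ⊢
        intro i; rw [← key i]; exact h i
      rw [dif_neg h, dif_neg h']
  · -- not everywhere none
    intro heq
    obtain ⟨y, hy⟩ := iter_ev_zero f hprog 0 x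
    have h0 : ∃ i, (c i).2 0 ≠ none := ⟨1, by rw [show (c 1).2 0 = some y from hy]; simp⟩
    have hne : (iterStar f x).2 0 ≠ none := by
      show (if h : ∃ i, (c i).2 0 ≠ none then (c h.choose).2 0 else none) ≠ none
      rw [dif_pos h0]; exact h0.choose_spec
    exact hne (congrFun heq 0)
  · -- defined below duration
    intro t ht
    replace ht : (t : ℝ≥0∞) < ⨆ i, (c i).1 := ht
    rw [lt_iSup_iff] at ht
    obtain ⟨n, hn⟩ := ht
    have hne := iter_defined f hf hprog n x t hn
    have hex : ∃ i, (c i).2 t ≠ none := ⟨n + 1, hne⟩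
    show (if h : ∃ i, (c i).2 t ≠ none then (c h.choose).2 t else none) ≠ none
    rw [dif_pos hex]; exact hex.choose_spec
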